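/- Let p ∈ (1,∞). For every ε > 0 there exists a constant c_ε > 0, depending only on p and ε (in particular independent of δ), such that for all δ ≥ 0 and all s, t ≥ 0 one has both t·s ≤ ε·φ(t) + c_ε·φ*(s) and t·φ'(s) + φ'(t)·s ≤ ε·φ(t) + c_ε·φ(s). -/

import Mathlib

/-- The N-function `φ = φ_{p,δ}`, `φ(t) = ∫₀ᵗ (δ+s)^(p-2)·s ds`. -/
noncomputable def phiFun (p δ t : ℝ) : ℝ := ∫ s in (0:ℝ)..t, (δ + s) ^ (p - 2) * s

/-- The derivative `φ'(t) = (δ+t)^(p-2)·t`. -/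
noncomputable def phiDeriv (p δ t : ℝ) : ℝ := (δ + t) ^ (p - 2) * t

/-- The convex conjugate of an N-function: `ψ*(s) = sup_{t ≥ 0} (s·t − ψ(t))`. -/
noncomputable def conjFun (ψ : ℝ → ℝ) (s : ℝ) : ℝ :=
  sSup ((fun t => s * t - ψ t) '' Set.Ici 0)

section young_aux

variable {p δ : ℝ}




lemma phiDeriv_nonneg (hδ : 0 ≤ δ) {t : ℝ} (ht : 0 ≤ t) : 0 ≤ phiDeriv p δ t :=
  mul_nonneg (Real.rpow_nonneg (by linarith) _) ht

lemma phiDeriv_mono (hp : 1 < p) (hδ : 0 ≤ δ) : MonotoneOn (phiDeriv p δ) (Set.Ici 0) := by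
  intro a ha b hb hab
  simp only [Set.mem_Ici] at ha hb
  rcases eq_or_lt_of_le (by linarith : (0:ℝ) ≤ δ + a) with h0 | h0
  · have ha0 : a = 0 := by linarith
    have : phiDeriv p δ a = 0 := by simp [phiDeriv, ha0]
    rw [this]; exact phiDeriv_nonneg hδ hb
  · have hb0 : (0:ℝ) < δ + b := by linarith
    have e : ∀ x : ℝ, 0 < x → x ^ (p - 2) = x ^ (p - 1) / x := by
      intro x hx
      rw [show p - 2 = p - 1 - 1 by ring, Real.rpow_sub_one hx.ne']
    unfold phiDeriv
    rw [e _ h0, e _ hb0, div_mul_eq_mul_div, div_mul_eq_mul_div, mul_div_assoc, mul_div_assoc]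
    have h1 : (δ + a) ^ (p - 1) ≤ (δ + b) ^ (p - 1) :=
      Real.rpow_le_rpow h0.le (by linarith) (by linarith)
    have h2 : a / (δ + a) ≤ b / (δ + b) := by
      rw [div_le_div_iff₀ h0 hb0]; nlinarith
    exact mul_le_mul h1 h2 (div_nonneg ha h0.le) (Real.rpow_nonneg hb0.le _)

lemma phiDeriv_intIntegrable (hp : 1 < p) (hδ : 0 ≤ δ) {a b : ℝ} (ha : 0 ≤ a) (hab : a ≤ b) :
    IntervalIntegrable (fun u => (δ + u) ^ (p - 2) * u) MeasureTheory.volume a b := by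
  apply MonotoneOn.intervalIntegrable
  have : Set.uIcc a b ⊆ Set.Ici 0 := by
    rw [Set.uIcc_of_le hab]
    exact fun x hx => le_trans ha hx.1
  exact (phiDeriv_mono hp hδ).mono this

lemma phiFun_nonneg (hδ : 0 ≤ δ) {t : ℝ} (ht : 0 ≤ t) : 0 ≤ phiFun p δ t := by
  apply intervalIntegral.integral_nonneg ht
  intro u hu
  exact phiDeriv_nonneg hδ hu.1

lemma phiFun_zero : phiFun p δ 0 = 0 := intervalIntegral.integral_same

lemma phiFun_lower (hp : 1 < p) (hδ : 0 ≤ δ) {t : ℝ} (ht : 0 ≤ t) :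
    t / 2 * phiDeriv p δ (t / 2) ≤ phiFun p δ t := by
  have ht2 : 0 ≤ t / 2 := by linarith
  have h1 := phiDeriv_intIntegrable hp hδ (le_refl 0) ht2
  have h2 := phiDeriv_intIntegrable hp hδ ht2 (by linarith : t / 2 ≤ t)
  have hsplit : phiFun p δ t
      = (∫ u in (0:ℝ)..(t/2), (δ + u) ^ (p - 2) * u)
        + ∫ u in (t/2)..t, (δ + u) ^ (p - 2) * u :=
    (intervalIntegral.integral_add_adjacent_intervals h1 h2).symm
  have hlow : (t - t/2) * phiDeriv p δ (t/2) ≤ ∫ u in (t/2)..t, (δ + u) ^ (p - 2) * u := by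
    have := intervalIntegral.integral_mono_on (by linarith : t/2 ≤ t)
      (intervalIntegrable_const (c := phiDeriv p δ (t/2))) h2
      (fun x hx => phiDeriv_mono hp hδ (Set.mem_Ici.mpr ht2)
        (Set.mem_Ici.mpr (le_trans ht2 hx.1)) hx.1)
    simpa [intervalIntegral.integral_const, smul_eq_mul] using this
  have hfirst : 0 ≤ ∫ u in (0:ℝ)..(t/2), (δ + u) ^ (p - 2) * u := by
    apply intervalIntegral.integral_nonneg ht2
    intro u hu; exact phiDeriv_nonneg hδ hu.1
  rw [hsplit]
  have : t - t/2 = t/2 := by ring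
  rw [this] at hlow
  linarith


lemma base_scale1 (hp : 1 < p) (hδ : 0 ≤ δ) {l u : ℝ} (hl0 : 0 < l) (hl1 : l ≤ 1)
    (hu : 0 ≤ u) : phiDeriv p δ (l * u) ≤ l ^ (min p 2 - 1) * phiDeriv p δ u := by
  rcases eq_or_lt_of_le hu with h | hu0
  · have : phiDeriv p δ (l * u) = 0 := by simp [phiDeriv, ← h]
    rw [this]
    exact mul_nonneg (Real.rpow_nonneg hl0.le _) (phiDeriv_nonneg hδ hu)
  · have hlu : 0 < l * u := mul_pos hl0 hu0
    have hbase : (0:ℝ) < δ + l * u := by linarith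
    have hbase2 : (0:ℝ) < δ + u := by linarith
    -- reduce to factor inequality
    have key : (δ + l * u) ^ (p - 2) * l ≤ l ^ (min p 2 - 1) * (δ + u) ^ (p - 2) := by
      rcases le_total 2 p with h2p | hp2
      · have hmin : min p 2 = 2 := min_eq_right h2p
        rw [hmin]
        have : (δ + l * u) ^ (p - 2) ≤ (δ + u) ^ (p - 2) :=
          Real.rpow_le_rpow hbase.le (by nlinarith) (by linarith)
        calc (δ + l * u) ^ (p - 2) * l ≤ (δ + u) ^ (p - 2) * l :=
              mul_le_mul_of_nonneg_right this hl0.le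
          _ = l ^ (2 - 1 : ℝ) * (δ + u) ^ (p - 2) := by
              norm_num [Real.rpow_one]; ring
      · have hmin : min p 2 = p := min_eq_left hp2
        rw [hmin]
        have h1 : (δ + l * u) ^ (p - 2) ≤ (l * (δ + u)) ^ (p - 2) := by
          apply Real.rpow_le_rpow_of_nonpos (by nlinarith) (by nlinarith) (by linarith)
        have h2 : (l * (δ + u)) ^ (p - 2) = l ^ (p - 2) * (δ + u) ^ (p - 2) :=
          Real.mul_rpow hl0.le hbase2.le
        have h3 : l ^ (p - 2) * l = l ^ (p - 1) := by
          rw [← Real.rpow_add_one hl0.ne' (p - 2)]; ring_nf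
        calc (δ + l * u) ^ (p - 2) * l ≤ l ^ (p - 2) * (δ + u) ^ (p - 2) * l := by
              rw [← h2]; exact mul_le_mul_of_nonneg_right h1 hl0.le
          _ = l ^ (p - 1) * (δ + u) ^ (p - 2) := by rw [← h3]; ring
    calc phiDeriv p δ (l * u) = ((δ + l * u) ^ (p - 2) * l) * u := by
          unfold phiDeriv; ring
      _ ≤ (l ^ (min p 2 - 1) * (δ + u) ^ (p - 2)) * u :=
          mul_le_mul_of_nonneg_right key hu
      _ = l ^ (min p 2 - 1) * phiDeriv p δ u := by unfold phiDeriv; ring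

lemma base_scale2 (hp : 1 < p) (hδ : 0 ≤ δ) {l s : ℝ} (hl0 : 0 < l) (hl1 : l ≤ 1)
    (hs : 0 ≤ s) : phiDeriv p δ (s / l) ≤ l ^ (1 - max p 2) * phiDeriv p δ s := by
  rcases eq_or_lt_of_le hs with h | hs0
  · have : phiDeriv p δ (s / l) = 0 := by simp [phiDeriv, ← h]
    rw [this]
    exact mul_nonneg (Real.rpow_nonneg hl0.le _) (phiDeriv_nonneg hδ hs)
  · have hsl : 0 < s / l := div_pos hs0 hl0
    have hbase : (0:ℝ) < δ + s / l := by linarith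
    have hbase2 : (0:ℝ) < δ + s := by linarith
    have hss : s ≤ s / l := by
      rw [le_div_iff₀ hl0]; nlinarith
    have key : (δ + s / l) ^ (p - 2) ≤ l ^ (2 - max p 2) * (δ + s) ^ (p - 2) := by
      rcases le_total 2 p with h2p | hp2
      · have hmax : max p 2 = p := max_eq_left h2p
        rw [hmax]
        have h1 : δ + s / l ≤ l⁻¹ * (δ + s) := by
          rw [inv_mul_eq_div, le_div_iff₀ hl0]
          have : (δ + s / l) * l = δ * l + s := by field_simp
          rw [this]; nlinarith
        have h2 : (δ + s / l) ^ (p - 2) ≤ (l⁻¹ * (δ + s)) ^ (p - 2) :=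
          Real.rpow_le_rpow hbase.le h1 (by linarith)
        have h3 : (l⁻¹ * (δ + s)) ^ (p - 2) = l ^ (2 - p) * (δ + s) ^ (p - 2) := by
          rw [Real.mul_rpow (by positivity) hbase2.le, Real.inv_rpow hl0.le,
            ← Real.rpow_neg hl0.le, show -(p-2) = 2 - p by ring]
        rw [← h3]; exact h2
      · have hmax : max p 2 = 2 := max_eq_right hp2
        rw [hmax]
        rw [show (2:ℝ) - 2 = 0 by norm_num, Real.rpow_zero, one_mul]
        exact Real.rpow_le_rpow_of_nonpos hbase2 (by linarith) (by linarith)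
    have h4 : l ^ (2 - max p 2) * l⁻¹ = l ^ (1 - max p 2) := by
      rw [← Real.rpow_neg_one l, ← Real.rpow_add hl0]; ring_nf
    calc phiDeriv p δ (s / l) = (δ + s / l) ^ (p - 2) * l⁻¹ * s := by
          unfold phiDeriv; field_simp
      _ ≤ l ^ (2 - max p 2) * (δ + s) ^ (p - 2) * l⁻¹ * s := by
          apply mul_le_mul_of_nonneg_right _ hs
          exact mul_le_mul_of_nonneg_right key (by positivity)
      _ = (l ^ (2 - max p 2) * l⁻¹) * ((δ + s) ^ (p - 2) * s) := by ring
      _ = l ^ (1 - max p 2) * phiDeriv p δ s := by rw [h4]; rfl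

lemma base_half (hp : 1 < p) (hδ : 0 ≤ δ) {t : ℝ} (ht : 0 ≤ t) :
    phiDeriv p δ t ≤ 2 ^ (max p 2 - 1) * phiDeriv p δ (t / 2) := by
  have h := base_scale2 hp hδ (l := 1/2) (s := t/2) (by norm_num) (by norm_num) (by linarith)
  have e1 : t / 2 / (1 / 2) = t := by ring
  have e2 : ((1:ℝ)/2) ^ (1 - max p 2) = 2 ^ (max p 2 - 1) := by
    rw [show (1/2 : ℝ) = 2⁻¹ by norm_num, Real.inv_rpow (by norm_num),
      ← Real.rpow_neg (by norm_num), show -(1 - max p 2) = max p 2 - 1 by ring]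
  rw [e1, e2] at h
  exact h

lemma t_f_le (hp : 1 < p) (hδ : 0 ≤ δ) {t : ℝ} (ht : 0 ≤ t) :
    t * phiDeriv p δ t ≤ 2 ^ (max p 2) * phiFun p δ t := by
  have h1 : t * phiDeriv p δ t ≤ t * (2 ^ (max p 2 - 1) * phiDeriv p δ (t / 2)) :=
    mul_le_mul_of_nonneg_left (base_half hp hδ ht) ht
  have h2 : t * (2 ^ (max p 2 - 1) * phiDeriv p δ (t / 2))
      = (2 ^ (max p 2 - 1) * 2) * (t / 2 * phiDeriv p δ (t / 2)) := by ring
  have h3 : (2:ℝ) ^ (max p 2 - 1) * 2 = 2 ^ (max p 2) := by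
    rw [← Real.rpow_add_one (by norm_num : (2:ℝ) ≠ 0) (max p 2 - 1)]; ring_nf
  have h4 : (2:ℝ) ^ (max p 2 - 1) * 2 * (t / 2 * phiDeriv p δ (t / 2))
      ≤ 2 ^ (max p 2) * phiFun p δ t := by
    rw [h3]
    exact mul_le_mul_of_nonneg_left (phiFun_lower hp hδ ht) (by positivity)
  linarith

variable {p δ : ℝ}

lemma phiFun_scale (hp : 1 < p) (hδ : 0 ≤ δ) {l t : ℝ} (hl0 : 0 < l) (hl1 : l ≤ 1)
    (ht : 0 ≤ t) : phiFun p δ (l * t) ≤ l ^ (min p 2) * phiFun p δ t := by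
  have hsub : (l * ∫ u in (0:ℝ)..t, (δ + l * u) ^ (p - 2) * (l * u))
      = ∫ x in (l*0)..(l*t), (δ + x) ^ (p - 2) * x :=
    intervalIntegral.mul_integral_comp_mul_left (f := fun x => (δ + x) ^ (p - 2) * x) l
  rw [mul_zero] at hsub
  have int1 : IntervalIntegrable (fun u => (δ + l * u) ^ (p - 2) * (l * u))
      MeasureTheory.volume 0 t := by
    apply MonotoneOn.intervalIntegrable
    intro x hx y hy hxy
    rw [Set.uIcc_of_le ht] at hx hy
    exact phiDeriv_mono hp hδ (Set.mem_Ici.mpr (mul_nonneg hl0.le hx.1))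
      (Set.mem_Ici.mpr (mul_nonneg hl0.le hy.1))
      (mul_le_mul_of_nonneg_left hxy hl0.le)
  have int2 : IntervalIntegrable (fun u => l ^ (min p 2 - 1) * ((δ + u) ^ (p - 2) * u))
      MeasureTheory.volume 0 t :=
    (phiDeriv_intIntegrable hp hδ le_rfl ht).const_mul _
  have hmono : (∫ u in (0:ℝ)..t, (δ + l * u) ^ (p - 2) * (l * u))
      ≤ ∫ u in (0:ℝ)..t, l ^ (min p 2 - 1) * ((δ + u) ^ (p - 2) * u) :=
    intervalIntegral.integral_mono_on ht int1 int2
      (fun x hx => base_scale1 hp hδ hl0 hl1 hx.1)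
  have hconst : (∫ u in (0:ℝ)..t, l ^ (min p 2 - 1) * ((δ + u) ^ (p - 2) * u))
      = l ^ (min p 2 - 1) * phiFun p δ t := by
    rw [intervalIntegral.integral_const_mul]; rfl
  have hpow : l * l ^ (min p 2 - 1) = l ^ (min p 2) := by
    rw [mul_comm, ← Real.rpow_add_one hl0.ne' (min p 2 - 1)]; ring_nf
  calc phiFun p δ (l * t) = l * ∫ u in (0:ℝ)..t, (δ + l * u) ^ (p - 2) * (l * u) := by
        rw [hsub]; rfl
    _ ≤ l * (l ^ (min p 2 - 1) * phiFun p δ t) := by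
        apply mul_le_mul_of_nonneg_left _ hl0.le
        rw [← hconst]; exact hmono
    _ = l ^ (min p 2) * phiFun p δ t := by rw [← mul_assoc, hpow]

lemma phi_bddAbove (hp : 1 < p) (hδ : 0 ≤ δ) {s : ℝ} (hs : 0 ≤ s) :
    BddAbove ((fun t => s * t - phiFun p δ t) '' Set.Ici 0) := by
  -- choose u with phiDeriv p δ u ≥ 2 s
  set b : ℝ := (4 * s + 1) ^ (p - 1)⁻¹ with hb
  have hb0 : 0 ≤ b := Real.rpow_nonneg (by linarith) _
  set u : ℝ := max δ (max 1 b) with hu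
  have hu1 : (1:ℝ) ≤ u := le_trans (le_max_left 1 b) (le_max_right δ _)
  have hu0 : (0:ℝ) < u := by linarith
  have hud : δ ≤ u := le_max_left _ _
  have hub : b ≤ u := le_trans (le_max_right 1 b) (le_max_right δ _)
  have hup : 4 * s ≤ u ^ (p - 1) := by
    have h1 : b ^ (p - 1) = 4 * s + 1 :=
      Real.rpow_inv_rpow (by linarith) (by linarith [hp] : p - 1 ≠ 0)
    have h2 : b ^ (p - 1) ≤ u ^ (p - 1) := Real.rpow_le_rpow hb0 hub (by linarith)
    linarith
  have hfu : 2 * s ≤ phiDeriv p δ u := by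
    have hhalf : (1/2 : ℝ) * u ^ (p - 1) ≤ phiDeriv p δ u := by
      have hup1 : u ^ (p - 1) = u ^ (p - 2) * u := by
        rw [← Real.rpow_add_one hu0.ne' (p - 2)]; ring_nf
      rcases le_total 2 p with h2p | hp2
      · have : u ^ (p - 2) ≤ (δ + u) ^ (p - 2) :=
          Real.rpow_le_rpow hu0.le (by linarith) (by linarith)
        unfold phiDeriv
        nlinarith [Real.rpow_nonneg hu0.le (p - 2), Real.rpow_nonneg (by linarith : (0:ℝ) ≤ δ + u) (p - 2)]
      · have h1 : ((2:ℝ) * u) ^ (p - 2) ≤ (δ + u) ^ (p - 2) :=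
          Real.rpow_le_rpow_of_nonpos (by linarith) (by linarith) (by linarith)
        have h2 : ((2:ℝ) * u) ^ (p - 2) = 2 ^ (p - 2) * u ^ (p - 2) :=
          Real.mul_rpow (by norm_num) hu0.le
        have h3 : (1/2 : ℝ) ≤ 2 ^ (p - 2) := by
          have := Real.rpow_le_rpow_of_exponent_le (by norm_num : (1:ℝ) ≤ 2)
            (by linarith : (-1:ℝ) ≤ p - 2)
          rw [Real.rpow_neg_one] at this
          norm_num at this ⊢
          linarith
        unfold phiDeriv
        have h4 : u ^ (p - 2) * u = u ^ (p - 1) := hup1.symm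
        nlinarith [Real.rpow_nonneg hu0.le (p - 2)]
    have : (1/2:ℝ) * (4 * s) ≤ (1/2) * u ^ (p - 1) := by linarith
    linarith
  refine ⟨2 * s * u, ?_⟩
  rintro x ⟨t, ht, rfl⟩
  simp only [Set.mem_Ici] at ht
  rcases le_or_gt t (2 * u) with h | h
  · have h1 : s * t ≤ s * (2 * u) := mul_le_mul_of_nonneg_left h hs
    have h2 : 0 ≤ phiFun p δ t := phiFun_nonneg hδ ht
    simp only []
    nlinarith
  · have h2u : u ≤ t / 2 := by linarith
    have hf2 : phiDeriv p δ u ≤ phiDeriv p δ (t / 2) :=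
      phiDeriv_mono hp hδ (Set.mem_Ici.mpr hu0.le) (Set.mem_Ici.mpr (by linarith)) h2u
    have hlow := phiFun_lower hp hδ (by linarith : (0:ℝ) ≤ t)
    have : s * t ≤ phiFun p δ t := by nlinarith
    simp only []
    nlinarith [mul_nonneg (mul_nonneg (by norm_num : (0:ℝ) ≤ 2) hs) hu0.le]

lemma young_basic (hp : 1 < p) (hδ : 0 ≤ δ) {s t : ℝ} (hs : 0 ≤ s) (ht : 0 ≤ t) :
    t * s ≤ phiFun p δ t + conjFun (phiFun p δ) s := by
  have hmem : s * t - phiFun p δ t ∈ (fun t => s * t - phiFun p δ t) '' Set.Ici 0 :=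
    ⟨t, Set.mem_Ici.mpr ht, rfl⟩
  have := le_csSup (phi_bddAbove hp hδ hs) hmem
  unfold conjFun
  nlinarith [this]

lemma conj_nonneg (hp : 1 < p) (hδ : 0 ≤ δ) {s : ℝ} (hs : 0 ≤ s) :
    0 ≤ conjFun (phiFun p δ) s := by
  have hmem : (0:ℝ) ∈ (fun t => s * t - phiFun p δ t) '' Set.Ici 0 :=
    ⟨0, Set.mem_Ici.mpr le_rfl, by simp [phiFun_zero]⟩
  exact le_csSup (phi_bddAbove hp hδ hs) hmem


end young_aux

/-- Refined Young inequality: for `p ∈ (1,∞)` and every `ε > 0` there exists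
`c_ε > 0` depending only on `p` and `ε` (independent of `δ`) such that for all
`δ ≥ 0` and all `s, t ≥ 0` one has `t·s ≤ ε·φ(t) + c_ε·φ*(s)` and
`t·φ'(s) + φ'(t)·s ≤ ε·φ(t) + c_ε·φ(s)`. -/
theorem young_refined (p : ℝ) (hp : 1 < p) (ε : ℝ) (hε : 0 < ε) :
    ∃ c : ℝ, 0 < c ∧
      ∀ δ : ℝ, 0 ≤ δ → ∀ s : ℝ, 0 ≤ s → ∀ t : ℝ, 0 ≤ t →
        t * s ≤ ε * phiFun p δ t + c * conjFun (phiFun p δ) s ∧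
        t * phiDeriv p δ s + phiDeriv p δ t * s ≤ ε * phiFun p δ t + c * phiFun p δ s := by
  set r := min p 2 with hrdef
  set q := max p 2 with hqdef
  have hr1 : 1 < r := lt_min hp one_lt_two
  have hr2 : r ≤ 2 := min_le_right _ _
  have hq2 : 2 ≤ q := le_max_right _ _
  have h2q1 : (1:ℝ) ≤ 2 ^ (q + 1) := Real.one_le_rpow (by norm_num) (by linarith)
  have h2q0 : (0:ℝ) < 2 ^ (q + 1) := Real.rpow_pos_of_pos (by norm_num) _
  have h2q0' : (0:ℝ) < 2 ^ q := Real.rpow_pos_of_pos (by norm_num) _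
  set a := (ε / 2 ^ (q + 1)) ^ (r - 1)⁻¹ with hadef
  have ha0 : 0 < a := Real.rpow_pos_of_pos (div_pos hε h2q0) _
  set l := min 1 a with hldef
  have hl0 : 0 < l := lt_min one_pos ha0
  have hl1 : l ≤ 1 := min_le_left _ _
  have hlr : l ^ (r - 1) ≤ ε / 2 ^ (q + 1) := by
    have h1 : l ^ (r - 1) ≤ a ^ (r - 1) :=
      Real.rpow_le_rpow hl0.le (min_le_right _ _) (by linarith)
    have h2 : a ^ (r - 1) = ε / 2 ^ (q + 1) :=
      Real.rpow_inv_rpow (le_of_lt (div_pos hε h2q0)) (by intro h; linarith [hr1] : r - 1 ≠ 0)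
    linarith
  have hkey : l ^ (r - 1) * 2 ^ (q + 1) ≤ ε := (le_div_iff₀ h2q0).mp hlr
  have hlrε : l ^ (r - 1) ≤ ε := le_trans hlr (div_le_self hε.le h2q1)
  have hlq : (0:ℝ) < l ^ (-q) := Real.rpow_pos_of_pos hl0 _
  clear_value l a q r
  refine ⟨2 ^ (q + 1) * l ^ (-q), by positivity, ?_⟩
  intro δ hδ s hs t ht
  have hcl : l⁻¹ ≤ 2 ^ (q + 1) * l ^ (-q) := by
    have h1 : l ^ (-1:ℝ) ≤ l ^ (-q) := Real.rpow_le_rpow_of_exponent_ge hl0 hl1 (by linarith)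
    rw [← Real.rpow_neg_one l]
    nlinarith
  have hφt := phiFun_nonneg (p := p) hδ ht
  have hφs := phiFun_nonneg (p := p) hδ hs
  constructor
  · have hY := young_basic hp hδ hs (mul_nonneg hl0.le ht)
    have hφsc := phiFun_scale hp hδ hl0 hl1 ht
    rw [← hrdef] at hφsc
    have hconj := conj_nonneg hp hδ hs
    have h1 : l * (t * s) ≤ l ^ r * phiFun p δ t + conjFun (phiFun p δ) s := by
      nlinarith [hY, hφsc]
    have hrw : l ^ r = l ^ (r - 1) * l := by
      rw [← Real.rpow_add_one hl0.ne' (r - 1)]; ring_nf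
    have h2 : t * s ≤ l ^ (r - 1) * phiFun p δ t + l⁻¹ * conjFun (phiFun p δ) s := by
      rw [← mul_le_mul_iff_right₀ hl0]
      calc l * (t * s) ≤ l ^ r * phiFun p δ t + conjFun (phiFun p δ) s := h1
        _ = l * (l ^ (r - 1) * phiFun p δ t + l⁻¹ * conjFun (phiFun p δ) s) := by
            rw [hrw]; field_simp
    have h3 : l ^ (r - 1) * phiFun p δ t ≤ ε * phiFun p δ t :=
      mul_le_mul_of_nonneg_right hlrε hφt
    have h4 : l⁻¹ * conjFun (phiFun p δ) s
        ≤ (2 ^ (q + 1) * l ^ (-q)) * conjFun (phiFun p δ) s :=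
      mul_le_mul_of_nonneg_right hcl hconj
    linarith
  · have htf := t_f_le hp hδ ht
    have hsf := t_f_le hp hδ hs
    rw [← hqdef] at htf hsf
    have h5 : (2:ℝ) ^ (q + 1) = 2 ^ q * 2 := by
      rw [← Real.rpow_add_one (by norm_num : (2:ℝ) ≠ 0) q]
    rcases le_or_gt s (l * t) with hsl | hsl
    · have hA : t * phiDeriv p δ s ≤ l ^ (r - 1) * (t * phiDeriv p δ t) := by
        have h1 : phiDeriv p δ s ≤ phiDeriv p δ (l * t) :=
          phiDeriv_mono hp hδ (Set.mem_Ici.mpr hs)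
            (Set.mem_Ici.mpr (mul_nonneg hl0.le ht)) hsl
        have h2 := base_scale1 hp hδ hl0 hl1 ht
        rw [← hrdef] at h2
        calc t * phiDeriv p δ s ≤ t * (l ^ (r - 1) * phiDeriv p δ t) :=
              mul_le_mul_of_nonneg_left (le_trans h1 h2) ht
          _ = l ^ (r - 1) * (t * phiDeriv p δ t) := by ring
      have hB : phiDeriv p δ t * s ≤ l ^ (r - 1) * (t * phiDeriv p δ t) := by
        have h1 : phiDeriv p δ t * s ≤ phiDeriv p δ t * (l * t) :=
          mul_le_mul_of_nonneg_left hsl (phiDeriv_nonneg hδ ht)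
        have h2 : l ≤ l ^ (r - 1) := by
          have := Real.rpow_le_rpow_of_exponent_ge hl0 hl1 (by linarith : r - 1 ≤ 1)
          rw [Real.rpow_one] at this; exact this
        have h3 : 0 ≤ t * phiDeriv p δ t := mul_nonneg ht (phiDeriv_nonneg hδ ht)
        nlinarith
      have hlr0 : (0:ℝ) ≤ l ^ (r - 1) := Real.rpow_nonneg hl0.le _
      have hsum : t * phiDeriv p δ s + phiDeriv p δ t * s
          ≤ (l ^ (r - 1) * 2 ^ (q + 1)) * phiFun p δ t := by
        have h6 := mul_le_mul_of_nonneg_left htf hlr0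
        calc t * phiDeriv p δ s + phiDeriv p δ t * s
            ≤ 2 * (l ^ (r - 1) * (2 ^ q * phiFun p δ t)) := by linarith
          _ = (l ^ (r - 1) * 2 ^ (q + 1)) * phiFun p δ t := by rw [h5]; ring
      have hc : l ^ (r - 1) * 2 ^ (q + 1) * phiFun p δ t ≤ ε * phiFun p δ t :=
        mul_le_mul_of_nonneg_right hkey hφt
      have hcs : 0 ≤ (2 ^ (q + 1) * l ^ (-q)) * phiFun p δ s := by positivity
      linarith
    · have hts : t ≤ s / l := by
        rw [le_div_iff₀ hl0]; nlinarith [hsl]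
      have hfs := phiDeriv_nonneg (p := p) hδ hs
      have h2 : l⁻¹ ≤ l ^ (-q) := by
        rw [← Real.rpow_neg_one l]
        exact Real.rpow_le_rpow_of_exponent_ge hl0 hl1 (by linarith)
      have h3 : 0 ≤ s * phiDeriv p δ s := mul_nonneg hs hfs
      have hA : t * phiDeriv p δ s ≤ l ^ (-q) * (s * phiDeriv p δ s) := by
        calc t * phiDeriv p δ s ≤ (s / l) * phiDeriv p δ s :=
              mul_le_mul_of_nonneg_right hts hfs
          _ = l⁻¹ * (s * phiDeriv p δ s) := by field_simp
          _ ≤ l ^ (-q) * (s * phiDeriv p δ s) := mul_le_mul_of_nonneg_right h2 h3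
      have hB : phiDeriv p δ t * s ≤ l ^ (-q) * (s * phiDeriv p δ s) := by
        have h1 : phiDeriv p δ t ≤ phiDeriv p δ (s / l) :=
          phiDeriv_mono hp hδ (Set.mem_Ici.mpr ht) (Set.mem_Ici.mpr (by positivity)) hts
        have h2' := base_scale2 hp hδ hl0 hl1 hs
        rw [← hqdef] at h2'
        have h3' : l ^ (1 - q) ≤ l ^ (-q) :=
          Real.rpow_le_rpow_of_exponent_ge hl0 hl1 (by linarith)
        have h4 : phiDeriv p δ t ≤ l ^ (-q) * phiDeriv p δ s :=
          le_trans h1 (le_trans h2' (mul_le_mul_of_nonneg_right h3' hfs))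
        calc phiDeriv p δ t * s ≤ (l ^ (-q) * phiDeriv p δ s) * s :=
              mul_le_mul_of_nonneg_right h4 hs
          _ = l ^ (-q) * (s * phiDeriv p δ s) := by ring
      have hsum : t * phiDeriv p δ s + phiDeriv p δ t * s
          ≤ (2 ^ (q + 1) * l ^ (-q)) * phiFun p δ s := by
        have h6 := mul_le_mul_of_nonneg_left hsf hlq.le
        calc t * phiDeriv p δ s + phiDeriv p δ t * s
            ≤ 2 * (l ^ (-q) * (2 ^ q * phiFun p δ s)) := by linarith
          _ = (2 ^ (q + 1) * l ^ (-q)) * phiFun p δ s := by rw [h5]; ring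
      linarith [hsum, mul_nonneg hε.le hφt]
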